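/- For every pair of integers r ≥ 2 and ℓ ≥ 2, for the spider Sp^r_ℓ (a root vertex attached to ℓ vertex-disjoint paths of length r) and every r-colouring f of its edges, there exists a subtree S containing the root and a colour j ∈ {1,…,r} such that r·|{e ∈ E(S) : f(e) = j}| − |E(S)| ≥ ⌈(r-1)ℓ/2⌉. -/

import Mathlib

open SimpleGraph Finset


open SimpleGraph

/-- The spider `Sp^k_ℓ`: a root vertex (`none`) attached to `ℓ` internally disjoint paths
(legs) of length `k`.  Vertex `some (i, h)` is the `(h+1)`-st vertex (from the root) of the
`(i+1)`-st leg. -/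
def spiderGraph (ℓ k : ℕ) : SimpleGraph (Option (Fin ℓ × Fin k)) :=
  SimpleGraph.fromRel (fun a b =>
    (a = none ∧ ∃ p : Fin ℓ × Fin k, b = some p ∧ (p.2 : ℕ) = 0) ∨
    (∃ (i : Fin ℓ) (h h' : Fin k), a = some (i, h) ∧ b = some (i, h') ∧
      (h' : ℕ) = (h : ℕ) + 1))

namespace SpiderAux

variable {r ℓ : ℕ}

/-- The vertex preceding `some (i, h)` on leg `i`. -/
def prevV (i : Fin ℓ) (h : Fin r) : Option (Fin ℓ × Fin r) :=
  if (h : ℕ) = 0 then none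
  else some (i, ⟨(h : ℕ) - 1, lt_of_le_of_lt (Nat.pred_le _) h.isLt⟩)

/-- The `h`-th edge of leg `i`. -/
def spEdge (i : Fin ℓ) (h : Fin r) : Sym2 (Option (Fin ℓ × Fin r)) :=
  s(prevV i h, some (i, h))

lemma prevV_zero (i : Fin ℓ) (h : Fin r) (h0 : (h : ℕ) = 0) : prevV i h = none :=
  if_pos h0

lemma prevV_succ (i : Fin ℓ) (h h' : Fin r) (heq : (h' : ℕ) = (h : ℕ) + 1) :
    prevV i h' = some (i, h) := by
  rw [prevV, if_neg (by omega)]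
  simp only [Option.some_inj, Prod.mk.injEq]
  refine ⟨trivial, Fin.ext ?_⟩
  show (h' : ℕ) - 1 = (h : ℕ)
  omega

lemma prevV_ne (i : Fin ℓ) (h : Fin r) : prevV i h ≠ some (i, h) := by
  unfold prevV
  split
  · simp
  · rename_i hh
    intro hc
    injection hc with hc
    have v1 : (h : ℕ) - 1 = (h : ℕ) := congrArg (fun p : Fin ℓ × Fin r => (p.2 : ℕ)) hc
    omega

lemma adj_spEdge (i : Fin ℓ) (h : Fin r) :
    (spiderGraph ℓ r).Adj (prevV i h) (some (i, h)) := by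
  rw [spiderGraph, fromRel_adj]
  refine ⟨prevV_ne i h, Or.inl ?_⟩
  unfold prevV
  split
  · rename_i hh
    exact Or.inl ⟨rfl, (i, h), rfl, hh⟩
  · rename_i hh
    refine Or.inr ⟨i, _, h, rfl, rfl, ?_⟩
    show (h : ℕ) = (h : ℕ) - 1 + 1
    omega

lemma adj_iff {a b : Option (Fin ℓ × Fin r)} :
    (spiderGraph ℓ r).Adj a b ↔ ∃ i h, s(a, b) = spEdge i h := by
  constructor
  · rw [spiderGraph, fromRel_adj]
    rintro ⟨hne, (⟨rfl, ⟨i, h⟩, rfl, h0⟩ | ⟨i, h, h', rfl, rfl, heq⟩) |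
      (⟨rfl, ⟨i, h⟩, rfl, h0⟩ | ⟨i, h, h', rfl, rfl, heq⟩)⟩
    · exact ⟨i, h, by rw [spEdge, prevV_zero i h h0]⟩
    · exact ⟨i, h', by rw [spEdge, prevV_succ i h h' heq]⟩
    · exact ⟨i, h, by rw [spEdge, prevV_zero i h h0, Sym2.eq_swap]⟩
    · exact ⟨i, h', by rw [spEdge, prevV_succ i h h' heq, Sym2.eq_swap]⟩
  · rintro ⟨i, h, he⟩
    have hadj := adj_spEdge i h
    rw [spEdge, Sym2.eq_iff] at he
    rcases he with ⟨rfl, rfl⟩ | ⟨rfl, rfl⟩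
    · exact hadj
    · exact hadj.symm

lemma spEdge_inj :
    Function.Injective (fun p : Fin ℓ × Fin r => spEdge p.1 p.2) := by
  rintro ⟨i, h⟩ ⟨i', h'⟩ he
  simp only [spEdge, Sym2.eq_iff] at he
  rcases he with ⟨h1, h2⟩ | ⟨h1, h2⟩
  · exact Option.some_injective _ h2
  · exfalso
    rw [prevV] at h1 h2
    split at h1
    · cases h1
    · split at h2
      · cases h2
      · rename_i hh hh'
        injection h1 with h1'
        injection h2 with h2'
        have v1 : (h : ℕ) - 1 = (h' : ℕ) :=
          congrArg (fun p : Fin ℓ × Fin r => (p.2 : ℕ)) h1'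
        have v2 : (h : ℕ) = (h' : ℕ) - 1 :=
          congrArg (fun p : Fin ℓ × Fin r => (p.2 : ℕ)) h2'
        omega


/-- Subgraph consisting of the root plus, on each leg `i`, the first `t i` edges. -/
def spSub (t : Fin ℓ → ℕ) : (spiderGraph ℓ r).Subgraph where
  verts := {none} ∪ {v | ∃ (i : Fin ℓ) (h : Fin r), (h : ℕ) < t i ∧ v = some (i, h)}
  Adj a b := ∃ (i : Fin ℓ) (h : Fin r), (h : ℕ) < t i ∧ s(a, b) = spEdge i h
  adj_sub := by rintro a b ⟨i, h, _, he⟩; exact adj_iff.mpr ⟨i, h, he⟩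
  edge_vert := by
    rintro a b ⟨i, h, hlt, he⟩
    rw [spEdge, Sym2.eq_iff] at he
    rcases he with ⟨rfl, -⟩ | ⟨rfl, -⟩
    · rw [prevV]
      split
      · exact Or.inl rfl
      · refine Or.inr ⟨i, _, ?_, rfl⟩
        show (h : ℕ) - 1 < t i
        omega
    · exact Or.inr ⟨i, h, hlt, rfl⟩
  symm := by
    constructor
    rintro a b ⟨i, h, hlt, he⟩
    exact ⟨i, h, hlt, by rw [Sym2.eq_swap]; exact he⟩

lemma root_mem (t : Fin ℓ → ℕ) : none ∈ (spSub (r := r) t).verts := Or.inl rfl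

lemma spSub_adj_root (t : Fin ℓ → ℕ) (i : Fin ℓ) (h : Fin r) (hlt : (h : ℕ) < t i) :
    (spSub t).Adj (prevV i h) (some (i, h)) := ⟨i, h, hlt, rfl⟩

lemma mem_verts_some (t : Fin ℓ → ℕ) (i : Fin ℓ) (h : Fin r) (hlt : (h : ℕ) < t i) :
    some (i, h) ∈ (spSub t).verts := Or.inr ⟨i, h, hlt, rfl⟩

lemma reach_some (t : Fin ℓ → ℕ) :
    ∀ k (i : Fin ℓ) (h : Fin r), (h : ℕ) = k → ∀ hlt : (h : ℕ) < t i,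
      (spSub t).coe.Reachable ⟨some (i, h), mem_verts_some t i h hlt⟩
        ⟨none, root_mem t⟩ := by
  intro k
  induction k with
  | zero =>
    intro i h h0 hlt
    have hadj := spSub_adj_root t i h hlt
    rw [prevV_zero i h h0] at hadj
    exact (SimpleGraph.Subgraph.Adj.coe hadj.symm).reachable
  | succ k ih =>
    intro i h hk hlt
    have h0 : (h : ℕ) ≠ 0 := by omega
    set h' : Fin r := ⟨(h : ℕ) - 1, lt_of_le_of_lt (Nat.pred_le _) h.isLt⟩ with hh'
    have hprev : prevV i h = some (i, h') := by rw [prevV, if_neg h0]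
    have hadj := spSub_adj_root t i h hlt
    rw [hprev] at hadj
    have hlt' : (h' : ℕ) < t i := by
      show (h : ℕ) - 1 < t i
      omega
    have step : (spSub t).coe.Adj ⟨some (i, h), mem_verts_some t i h hlt⟩
        ⟨some (i, h'), mem_verts_some t i h' hlt'⟩ :=
      SimpleGraph.Subgraph.Adj.coe hadj.symm
    exact step.reachable.trans (ih i h' (by show (h : ℕ) - 1 = k; omega) hlt')

lemma spSub_connected (t : Fin ℓ → ℕ) : (spSub (r := r) t).Connected := by
  rw [SimpleGraph.Subgraph.connected_iff]
  refine ⟨⟨?_⟩, ⟨none, root_mem t⟩⟩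
  have key : ∀ v : (spSub (r := r) t).verts,
      (spSub (r := r) t).coe.Reachable v ⟨none, root_mem t⟩ := by
    rintro ⟨v, hv⟩
    rcases hv with hv | ⟨i, h, hlt, rfl⟩
    · rw [Set.mem_singleton_iff] at hv
      subst hv
      rfl
    · exact reach_some t (h : ℕ) i h rfl hlt
  intro u v
  exact (key u).trans (key v).symm

lemma spSub_edgeSet (t : Fin ℓ → ℕ) :
    (spSub (r := r) t).edgeSet
      = (fun p : Fin ℓ × Fin r => spEdge p.1 p.2) '' {p | (p.2 : ℕ) < t p.1} := by
  ext e
  induction e with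
  | _ a b =>
    rw [SimpleGraph.Subgraph.mem_edgeSet]
    constructor
    · rintro ⟨i, h, hlt, he⟩
      exact ⟨(i, h), hlt, he.symm⟩
    · rintro ⟨⟨i, h⟩, hlt, he⟩
      exact ⟨i, h, hlt, he.symm⟩


/-! ### Numeric core -/

lemma two_sum_finset (s : Finset ℕ) : s.card * s.card ≤ 2 * ∑ x ∈ s, x + s.card := by
  induction s using Finset.induction_on_max with
  | empty => simp
  | insert a s hmax ih =>
    have ha : a ∉ s := fun hc => lt_irrefl a (hmax a hc)
    have hcard : s.card ≤ a := by
      have hsub : s ⊆ Finset.range a := fun x hx => Finset.mem_range.mpr (hmax x hx)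
      simpa using Finset.card_le_card hsub
    rw [Finset.card_insert_of_notMem ha, Finset.sum_insert ha]
    nlinarith [ih]

variable (r) in
/-- Positions on a leg coloured `j`. -/
def occ (c : Fin r → Fin r) (j : Fin r) : Finset (Fin r) :=
  univ.filter (fun h => c h = j)

variable (r) in
/-- One plus the last position coloured `j` (or `0` if `j` does not occur). -/
def lastT (c : Fin r → Fin r) (j : Fin r) : ℕ :=
  if hne : (occ r c j).Nonempty then (((occ r c j).max' hne : Fin r) : ℕ) + 1 else 0

lemma lastT_le (c : Fin r → Fin r) (j : Fin r) : lastT r c j ≤ r := by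
  rw [lastT]
  split
  · rename_i hne
    exact ((occ r c j).max' hne).isLt
  · omega

lemma filter_lt_lastT (c : Fin r → Fin r) (j : Fin r) :
    (univ.filter fun h : Fin r => (h : ℕ) < lastT r c j ∧ c h = j) = occ r c j := by
  unfold lastT occ
  split
  · rename_i hne
    ext h
    simp only [Finset.mem_filter, Finset.mem_univ, true_and]
    constructor
    · rintro ⟨-, hc⟩; exact hc
    · intro hc
      refine ⟨?_, hc⟩
      have hmem : h ∈ univ.filter (fun h => c h = j) :=
        Finset.mem_filter.mpr ⟨mem_univ _, hc⟩
      have hle := Finset.le_max' _ h hmem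
      rw [Fin.le_def] at hle
      omega
  · rename_i hne
    rw [Finset.not_nonempty_iff_eq_empty] at hne
    rw [hne]
    apply Finset.filter_false_of_mem
    intro h _
    rintro ⟨h0, -⟩
    omega

lemma leg_bound (c : Fin r → Fin r) :
    (r : ℤ) * ((r : ℤ) - 1)
      ≤ 2 * ∑ j : Fin r, ((r : ℤ) * (occ r c j).card - lastT r c j) := by
  classical
  set Occ : Finset (Fin r) := univ.filter (fun j => (occ r c j).Nonempty) with hOcc
  set d : ℕ := Occ.card with hd
  -- the colour classes partition the r positions
  have hcount : ∑ j : Fin r, ((occ r c j).card : ℤ) = (r : ℤ) := by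
    have h1 : (univ : Finset (Fin r)).card = ∑ j : Fin r, (occ r c j).card :=
      Finset.card_eq_sum_card_fiberwise (fun x _ => mem_univ _)
    have : ∑ j : Fin r, (occ r c j).card = r := by
      rw [← h1, Finset.card_univ, Fintype.card_fin]
    exact_mod_cast this
  -- the "slack" function
  set u : Fin r → ℕ := fun j => r - lastT r c j with hu
  have hsum_u : ∀ j ∈ Occ, (u j : ℤ) = (r : ℤ) - lastT r c j := by
    intro j _
    have := lastT_le c j
    push_cast [hu, Nat.cast_sub this]
    ring
  -- lastT is injective on Occ
  have hinj : Set.InjOn (fun j => lastT r c j) Occ := by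
    intro j hj j' hj' he
    rw [hOcc, Finset.coe_filter] at hj hj'
    obtain ⟨-, hne⟩ := hj
    obtain ⟨-, hne'⟩ := hj'
    simp only [lastT, dif_pos hne, dif_pos hne'] at he
    have hmax : (occ r c j).max' hne = (occ r c j').max' hne' := Fin.ext (by omega)
    have h1 : c ((occ r c j).max' hne) = j := by
      have := (occ r c j).max'_mem hne
      simpa [occ] using this
    have h2 : c ((occ r c j').max' hne') = j' := by
      have := (occ r c j').max'_mem hne'
      simpa [occ] using this
    rw [← h1, ← h2, hmax]
  have hinj_u : Set.InjOn u Occ := by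
    intro j hj j' hj' he
    apply hinj hj hj'
    have l1 := lastT_le c j
    have l2 := lastT_le c j'
    simp only [hu] at he
    simp only
    omega
  -- sum of distinct slack values
  set U : Finset ℕ := Occ.image u with hU
  have hcardU : U.card = d := Finset.card_image_of_injOn hinj_u
  have hsumU : ∑ x ∈ U, x = ∑ j ∈ Occ, u j := Finset.sum_image (fun x hx y hy => hinj_u hx hy)
  have hkey : (d : ℤ) * d ≤ 2 * ∑ j ∈ Occ, (u j : ℤ) + d := by
    have := two_sum_finset U
    rw [hcardU, hsumU] at this
    exact_mod_cast this
  -- relate ∑ lastT to ∑ u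
  have hlast_occ : ∑ j : Fin r, (lastT r c j : ℤ) = ∑ j ∈ Occ, (lastT r c j : ℤ) := by
    refine (Finset.sum_subset (Finset.subset_univ Occ) ?_).symm
    intro j _ hj
    rw [hOcc, Finset.mem_filter] at hj
    push_neg at hj
    have hne : ¬(occ r c j).Nonempty := Finset.not_nonempty_iff_eq_empty.mpr (hj (mem_univ j))
    simp [lastT, dif_neg hne]
  have hsum_last : ∑ j ∈ Occ, (lastT r c j : ℤ) = (d : ℤ) * r - ∑ j ∈ Occ, (u j : ℤ) := by
    have : ∑ j ∈ Occ, ((lastT r c j : ℤ) + u j) = ∑ j ∈ Occ, (r : ℤ) := by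
      apply Finset.sum_congr rfl
      intro j hj
      rw [hsum_u j hj]; ring
    rw [Finset.sum_add_distrib, Finset.sum_const, nsmul_eq_mul] at this
    rw [← hd] at this
    linarith
  have hdr : (d : ℤ) ≤ r := by
    have : Occ.card ≤ (univ : Finset (Fin r)).card := Finset.card_le_card (Finset.subset_univ _)
    rw [Finset.card_univ, Fintype.card_fin] at this
    exact_mod_cast this
  have hsplit : ∑ j : Fin r, ((r : ℤ) * (occ r c j).card - lastT r c j)
      = (r : ℤ) * r - ∑ j : Fin r, (lastT r c j : ℤ) := by
    rw [Finset.sum_sub_distrib, ← Finset.mul_sum, hcount]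
  rw [hsplit, hlast_occ, hsum_last]
  nlinarith [hkey, sq_nonneg ((r : ℤ) - d)]

lemma exists_colour (hr : 0 < r) (c : Fin ℓ → Fin r → Fin r) :
    ∃ j : Fin r, (ℓ : ℤ) * ((r : ℤ) - 1)
      ≤ 2 * ∑ i : Fin ℓ, ((r : ℤ) * (occ r (c i) j).card - lastT r (c i) j) := by
  classical
  have hsum : (r : ℤ) * ((ℓ : ℤ) * ((r : ℤ) - 1))
      ≤ ∑ j : Fin r, 2 * ∑ i : Fin ℓ, ((r : ℤ) * (occ r (c i) j).card - lastT r (c i) j) := by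
    have h1 : ∀ i : Fin ℓ, (r : ℤ) * ((r : ℤ) - 1)
        ≤ 2 * ∑ j : Fin r, ((r : ℤ) * (occ r (c i) j).card - lastT r (c i) j) :=
      fun i => leg_bound (c i)
    have h2 : (ℓ : ℤ) * ((r : ℤ) * ((r : ℤ) - 1))
        ≤ ∑ i : Fin ℓ, 2 * ∑ j : Fin r, ((r : ℤ) * (occ r (c i) j).card - lastT r (c i) j) := by
      calc (ℓ : ℤ) * ((r : ℤ) * ((r : ℤ) - 1))
          = ∑ _i : Fin ℓ, (r : ℤ) * ((r : ℤ) - 1) := by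
            rw [Finset.sum_const, Finset.card_univ, Fintype.card_fin, nsmul_eq_mul]
        _ ≤ _ := Finset.sum_le_sum (fun i _ => h1 i)
    calc (r : ℤ) * ((ℓ : ℤ) * ((r : ℤ) - 1)) = (ℓ : ℤ) * ((r : ℤ) * ((r : ℤ) - 1)) := by ring
      _ ≤ ∑ i : Fin ℓ, 2 * ∑ j : Fin r, ((r : ℤ) * (occ r (c i) j).card - lastT r (c i) j) := h2
      _ = ∑ j : Fin r, 2 * ∑ i : Fin ℓ, ((r : ℤ) * (occ r (c i) j).card - lastT r (c i) j) := by
          simp_rw [Finset.mul_sum]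
          rw [Finset.sum_comm]
  have hne : (univ : Finset (Fin r)).Nonempty := ⟨⟨0, hr⟩, mem_univ _⟩
  have := Finset.exists_le_of_sum_le hne (by
    calc ∑ _j : Fin r, (ℓ : ℤ) * ((r : ℤ) - 1)
        = (r : ℤ) * ((ℓ : ℤ) * ((r : ℤ) - 1)) := by
          rw [Finset.sum_const, Finset.card_univ, Fintype.card_fin, nsmul_eq_mul]
      _ ≤ _ := hsum)
  obtain ⟨j, -, hj⟩ := this
  exact ⟨j, hj⟩


/-! ### Counting -/

lemma card_filter_prod (P : Fin ℓ × Fin r → Prop) [DecidablePred P] :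
    (univ.filter P).card = ∑ i : Fin ℓ, (univ.filter fun h : Fin r => P (i, h)).card := by
  simp_rw [Finset.card_filter]
  rw [← Finset.univ_product_univ, Finset.sum_product]

lemma card_filter_lt {m : ℕ} (hm : m ≤ r) :
    (univ.filter fun h : Fin r => (h : ℕ) < m).card = m := by
  have key : (univ.filter fun h : Fin r => (h : ℕ) < m).card = (Finset.range m).card := by
    apply Finset.card_bij (fun (h : Fin r) _ => (h : ℕ))
    · intro a ha
      rw [Finset.mem_filter] at ha
      exact Finset.mem_range.mpr ha.2
    · intro a _ b _ hab
      exact Fin.ext hab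
    · intro b hb
      rw [Finset.mem_range] at hb
      exact ⟨⟨b, lt_of_lt_of_le hb hm⟩, Finset.mem_filter.mpr ⟨mem_univ _, hb⟩, rfl⟩
  rw [key, Finset.card_range]

lemma ncard_edges (t : Fin ℓ → ℕ) (ht : ∀ i, t i ≤ r) :
    (spSub (r := r) t).edgeSet.ncard = ∑ i : Fin ℓ, t i := by
  classical
  have hset : {p : Fin ℓ × Fin r | (p.2 : ℕ) < t p.1}
      = ↑(univ.filter fun p : Fin ℓ × Fin r => (p.2 : ℕ) < t p.1) := by
    ext p; simp
  rw [spSub_edgeSet, hset, Set.ncard_image_of_injective _ spEdge_inj,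
    Set.ncard_coe_finset, card_filter_prod]
  exact Finset.sum_congr rfl fun i _ => card_filter_lt (ht i)

lemma ncard_colour_edges (t : Fin ℓ → ℕ) (f : Sym2 (Option (Fin ℓ × Fin r)) → Fin r)
    (j : Fin r) :
    ({e ∈ (spSub (r := r) t).edgeSet | f e = j}).ncard
      = ∑ i : Fin ℓ,
          (univ.filter fun h : Fin r => (h : ℕ) < t i ∧ f (spEdge i h) = j).card := by
  classical
  have himg : {e ∈ (spSub (r := r) t).edgeSet | f e = j}
      = (fun p : Fin ℓ × Fin r => spEdge p.1 p.2)
        '' {p | (p.2 : ℕ) < t p.1 ∧ f (spEdge p.1 p.2) = j} := by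
    rw [spSub_edgeSet]
    ext e
    constructor
    · rintro ⟨⟨p, hp, rfl⟩, hfe⟩
      exact ⟨p, ⟨hp, hfe⟩, rfl⟩
    · rintro ⟨p, ⟨hp, hfe⟩, rfl⟩
      exact ⟨⟨p, hp, rfl⟩, hfe⟩
  have hset : {p : Fin ℓ × Fin r | (p.2 : ℕ) < t p.1 ∧ f (spEdge p.1 p.2) = j}
      = ↑(univ.filter fun p : Fin ℓ × Fin r => (p.2 : ℕ) < t p.1 ∧ f (spEdge p.1 p.2) = j) := by
    ext p; simp
  rw [himg, hset, Set.ncard_image_of_injective _ spEdge_inj, Set.ncard_coe_finset,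
    card_filter_prod]

end SpiderAux


open SpiderAux in
/-- **Spider lower bound.**  For `r ≥ 2` and `ℓ ≥ 2`, for every `r`-colouring `f` of the
edges of the spider `Sp^r_ℓ` there is a subtree `S` containing the root and a colour `j`
whose imbalance `r·|{e ∈ E(S) : f e = j}| − |E(S)|` is at least `⌈(r-1)ℓ/2⌉`. -/
theorem spider_discrepancy_lower_bound (r ℓ : ℕ) (hr : 2 ≤ r) (hℓ : 2 ≤ ℓ)
    (f : Sym2 (Option (Fin ℓ × Fin r)) → Fin r) :
    ∃ S : (spiderGraph ℓ r).Subgraph, S.Connected ∧ none ∈ S.verts ∧ ∃ j : Fin r,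
      (⌈(((r : ℚ) - 1) * ℓ) / 2⌉ : ℤ) ≤
        (r : ℤ) * ({e ∈ S.edgeSet | f e = j} : Set (Sym2 (Option (Fin ℓ × Fin r)))).ncard
          - (S.edgeSet.ncard : ℤ) := by
  classical
  set c : Fin ℓ → Fin r → Fin r := fun i h => f (spEdge i h) with hc
  obtain ⟨j, hj⟩ := exists_colour (by omega) c
  set t : Fin ℓ → ℕ := fun i => lastT r (c i) j with ht
  refine ⟨spSub t, spSub_connected t, root_mem t, j, ?_⟩
  have hE : (spSub (r := r) t).edgeSet.ncard = ∑ i : Fin ℓ, t i :=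
    ncard_edges t (fun i => lastT_le (c i) j)
  have hEj : ({e ∈ (spSub (r := r) t).edgeSet | f e = j}).ncard
      = ∑ i : Fin ℓ, (occ r (c i) j).card := by
    rw [ncard_colour_edges t f j]
    refine Finset.sum_congr rfl fun i _ => ?_
    rw [← filter_lt_lastT (c i) j]
  rw [hE, hEj, Int.ceil_le, div_le_iff₀ (by norm_num : (0:ℚ) < 2)]
  have hjq : (ℓ : ℚ) * ((r : ℚ) - 1)
      ≤ 2 * ((r : ℚ) * (∑ i : Fin ℓ, ((occ r (c i) j).card : ℚ))
          - ∑ i : Fin ℓ, (t i : ℚ)) := by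
    have h2 : (ℓ : ℤ) * ((r : ℤ) - 1)
        ≤ 2 * ((r : ℤ) * (∑ i : Fin ℓ, ((occ r (c i) j).card : ℤ))
            - ∑ i : Fin ℓ, (t i : ℤ)) := by
      calc (ℓ : ℤ) * ((r : ℤ) - 1)
          ≤ 2 * ∑ i : Fin ℓ, ((r : ℤ) * (occ r (c i) j).card - lastT r (c i) j) := hj
        _ = 2 * ((r : ℤ) * (∑ i : Fin ℓ, ((occ r (c i) j).card : ℤ))
            - ∑ i : Fin ℓ, (t i : ℤ)) := by
            rw [Finset.sum_sub_distrib, Finset.mul_sum]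
    exact_mod_cast h2
  push_cast
  linarith
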